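/- arXiv:2101.09521 — 2 statements merged into one kernel-verified Lean document; each statement's English description precedes it below -/
import Mathlib

section
/- For real numbers a, b and μ > 0, the smoothed Fischer-Burmeister function φ_μ(a,b) := √(a² + b² + 2μ) − a − b satisfies φ_μ(a,b) = 0 if and only if a > 0, b > 0, and a·b = μ. -/
theorem stmt1 (μ a b : ℝ) (hμ : 0 < μ) :
    Real.sqrt (a^2 + b^2 + 2*μ) - a - b = 0 ↔ 0 < a ∧ 0 < b ∧ a * b = μ := by
  constructor
  · intro h
    have hs : Real.sqrt (a^2 + b^2 + 2*μ) = a + b := by linarith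
    have hnn : 0 ≤ a + b := hs ▸ Real.sqrt_nonneg _
    have hsq : (a + b)^2 = a^2 + b^2 + 2*μ := by
      rw [← hs]; exact Real.sq_sqrt (by nlinarith [sq_nonneg a, sq_nonneg b])
    have hab : a * b = μ := by nlinarith
    have ha : 0 < a := by
      by_contra hna
      push_neg at hna
      nlinarith
    exact ⟨ha, by nlinarith, hab⟩
  · rintro ⟨ha, hb, hab⟩
    have : a^2 + b^2 + 2*μ = (a + b)^2 := by nlinarith
    rw [this, Real.sqrt_sq (by linarith)]
    ring
end

section
/- Conversely, if (x̄,ȳ) is feasible for the value-function reformulation (G(x̄,ȳ) ≤ 0, g(x̄,ȳ) ≤ 0, f(x̄,ȳ) = φ(x̄)) and there exists λ̄ > 0 such that (x̄,ȳ) is a local minimizer of the penalized problem min F(x,y) + λ̄(f(x,y) − φ(x)) s.t. G(x,y) ≤ 0, g(x,y) ≤ 0, then (x̄,ȳ) is a local minimizer of the value-function reformulation and this reformulation is partially calm at (x̄,ȳ). -/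
open Matrix

theorem stmt6 {n m p q : ℕ}
    (F f : (Fin n → ℝ) → (Fin m → ℝ) → ℝ)
    (G : (Fin n → ℝ) → (Fin m → ℝ) → Fin q → ℝ)
    (g : (Fin n → ℝ) → (Fin m → ℝ) → Fin p → ℝ)
    (φ : (Fin n → ℝ) → ℝ)
    (hφ : ∀ x, IsGLB {v | ∃ y, (∀ i, g x y i ≤ 0) ∧ v = f x y} (φ x))
    (xb : Fin n → ℝ) (yb : Fin m → ℝ)
    (hfeasG : ∀ j, G xb yb j ≤ 0) (hfeasg : ∀ i, g xb yb i ≤ 0)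
    (hval : f xb yb = φ xb)
    (lam_bar : ℝ) (hlam : 0 < lam_bar)
    (hpen : IsLocalMinOn (fun z : (Fin n → ℝ) × (Fin m → ℝ) =>
        F z.1 z.2 + lam_bar * (f z.1 z.2 - φ z.1))
      {z | (∀ j, G z.1 z.2 j ≤ 0) ∧ (∀ i, g z.1 z.2 i ≤ 0)} (xb, yb)) :
    IsLocalMinOn (fun z : (Fin n → ℝ) × (Fin m → ℝ) => F z.1 z.2)
      {z | (∀ j, G z.1 z.2 j ≤ 0) ∧ (∀ i, g z.1 z.2 i ≤ 0) ∧ f z.1 z.2 ≤ φ z.1} (xb, yb) ∧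
    ∃ lam > (0:ℝ), ∃ U ∈ nhds (xb, yb, (0:ℝ)),
      ∀ x y u, (x, y, u) ∈ U → (∀ j, G x y j ≤ 0) → (∀ i, g x y i ≤ 0) →
        f x y - φ x - u = 0 → 0 ≤ F x y - F xb yb + lam * |u| := by
  have hlow : ∀ x y, (∀ i, g x y i ≤ 0) → φ x ≤ f x y := by
    intro x y hg
    exact (hφ x).1 ⟨y, hg, rfl⟩
  obtain ⟨t, ht, htprop⟩ := (nhdsWithin_basis_open _ _).eventually_iff.mp hpen
  -- htprop : ∀ z ∈ t ∩ s, penalized ineq; t open nbhd? check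
  constructor
  · rw [IsLocalMinOn, IsMinFilter, eventually_nhdsWithin_iff]
    filter_upwards [ht.2.mem_nhds ht.1] with z hz hmem
    have h1 := htprop ⟨hz, hmem.1, hmem.2.1⟩
    have h2 : f z.1 z.2 - φ z.1 = 0 :=
      le_antisymm (sub_nonpos.mpr hmem.2.2) (sub_nonneg.mpr (hlow _ _ hmem.2.1))
    simp only [hval, sub_self, mul_zero, add_zero, h2] at h1
    exact h1
  · refine ⟨lam_bar, hlam, (fun z : (Fin n → ℝ) × (Fin m → ℝ) × ℝ => (z.1, z.2.1)) ⁻¹' t,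
      ?_, ?_⟩
    · exact (continuous_fst.prodMk (continuous_snd.fst)).continuousAt.preimage_mem_nhds
        (ht.2.mem_nhds ht.1)
    · intro x y u hU hG hg heq
      have hu : u = f x y - φ x := by linarith
      have hu0 : 0 ≤ u := by
        rw [hu]; exact sub_nonneg.mpr (hlow _ _ hg)
      have h1 := htprop (Set.mem_inter hU ⟨hG, hg⟩)
      rw [abs_of_nonneg hu0, hu]
      simp only [hval, sub_self, mul_zero, add_zero] at h1
      linarith
end
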